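/- Let s ∈ (0, √2) be such that f^(k)(s) ≠ 0 for all k ≥ 0, and for each k let i_k ∈ ℤ be the unique index with f^(k)(s) ∈ I_{i_k}. If the symbol sequence (i_k) is eventually periodic — i.e., there exist N ≥ 0 and p ≥ 1 with i_{k+p} = i_k for all k ≥ N — then s ∈ ℚ(√2). -/

import Mathlib

noncomputable section

/-- `β = √2 - 1`. -/
def β : ℝ := Real.sqrt 2 - 1

/-- `ω = √2 + 1`. -/
def ω : ℝ := Real.sqrt 2 + 1

/-- The break points `Δ_i`. -/
def Δ (i : ℤ) : ℝ :=
  if i < 0 then β ^ i.natAbs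
  else if i = 0 then β
  else Real.sqrt 2 - β ^ i.natAbs

/-- The intervals `I_i`. -/
def Iint (i : ℤ) : Set ℝ :=
  if i < 0 then Set.Ioc (Δ (i - 1)) (Δ i)
  else if i = 0 then Set.Ioo β 1
  else Set.Ico (Δ i) (Δ (i + 1))

/-- The defining formula of `f` on the interval `I_i`. -/
def fval (i : ℤ) (s : ℝ) : ℝ :=
  if i < 0 then ω ^ (i.natAbs + 1) * (Δ i - s)
  else if i = 0 then ω * (s - β)
  else ω ^ (i.natAbs + 1) * (s - Δ i)

/-- `f` is the renormalization map: `f 0 = f √2 = 0` and on each interval `I_i`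
    it is given by the corresponding affine formula. These conditions determine
    `f` uniquely on `[0, √2]`. -/
def IsLuroth (f : ℝ → ℝ) : Prop :=
  f 0 = 0 ∧ f (Real.sqrt 2) = 0 ∧ ∀ i : ℤ, ∀ s ∈ Iint i, f s = fval i s

/-- `ℚ(√2)` as a subset of `ℝ`. -/
def QSqrt2 : Set ℝ := {x | ∃ a b : ℚ, x = (a : ℝ) + (b : ℝ) * Real.sqrt 2}

lemma sqrt2_sq : Real.sqrt 2 * Real.sqrt 2 = 2 := Real.mul_self_sqrt (by norm_num)
lemma sqrt2_gt_one : 1 < Real.sqrt 2 := by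
  have := Real.lt_sqrt (x := 1) (y := 2) (by norm_num)
  rw [this]; norm_num
lemma sqrt2_lt_two : Real.sqrt 2 < 2 := by
  have := Real.sqrt_lt' (x := 2) (y := 2) (by norm_num)
  rw [this]; norm_num

lemma q_rat (q : ℚ) : (q : ℝ) ∈ QSqrt2 := ⟨q, 0, by push_cast; ring⟩
lemma q_one : (1 : ℝ) ∈ QSqrt2 := ⟨1, 0, by norm_num⟩
lemma q_sqrt2 : Real.sqrt 2 ∈ QSqrt2 := ⟨0, 1, by norm_num⟩
lemma q_add {x y : ℝ} (hx : x ∈ QSqrt2) (hy : y ∈ QSqrt2) : x + y ∈ QSqrt2 := by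
  obtain ⟨a, b, rfl⟩ := hx; obtain ⟨c, d, rfl⟩ := hy
  exact ⟨a + c, b + d, by push_cast; ring⟩
lemma q_neg {x : ℝ} (hx : x ∈ QSqrt2) : -x ∈ QSqrt2 := by
  obtain ⟨a, b, rfl⟩ := hx; exact ⟨-a, -b, by push_cast; ring⟩
lemma q_sub {x y : ℝ} (hx : x ∈ QSqrt2) (hy : y ∈ QSqrt2) : x - y ∈ QSqrt2 := by
  rw [sub_eq_add_neg]; exact q_add hx (q_neg hy)
lemma q_mul {x y : ℝ} (hx : x ∈ QSqrt2) (hy : y ∈ QSqrt2) : x * y ∈ QSqrt2 := by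
  obtain ⟨a, b, rfl⟩ := hx; obtain ⟨c, d, rfl⟩ := hy
  refine ⟨a * c + 2 * b * d, a * d + b * c, ?_⟩
  push_cast
  linear_combination ((b : ℝ) * d) * sqrt2_sq
lemma q_pow {x : ℝ} (hx : x ∈ QSqrt2) (n : ℕ) : x ^ n ∈ QSqrt2 := by
  induction n with
  | zero => simpa using q_one
  | succ n ih => rw [pow_succ]; exact q_mul ih hx
lemma q_inv {x : ℝ} (hx : x ∈ QSqrt2) : x⁻¹ ∈ QSqrt2 := by
  rcases eq_or_ne x 0 with rfl | hne
  · simpa using q_rat 0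
  obtain ⟨a, b, rfl⟩ := hx
  have hD : (a : ℝ) ^ 2 - 2 * (b : ℝ) ^ 2 ≠ 0 := by
    intro h
    rcases eq_or_ne b 0 with rfl | hb
    · simp at h
      exact hne (by simp [h])
    have hb' : (b : ℝ) ≠ 0 := by exact_mod_cast hb
    have h2 : ((a / b : ℚ) : ℝ) ^ 2 = 2 := by
      push_cast
      field_simp
      nlinarith
    have : Real.sqrt 2 = |((a / b : ℚ) : ℝ)| := by
      rw [← h2, Real.sqrt_sq_eq_abs]
    have : Irrational (Real.sqrt 2) := irrational_sqrt_two
    rw [‹Real.sqrt 2 = _›] at this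
    exact this ⟨|a / b|, by push_cast; simp⟩
  have hD' : ((a : ℚ) ^ 2 - 2 * b ^ 2 : ℚ) ≠ 0 := by
    intro h; apply hD; exact_mod_cast congrArg (Rat.cast : ℚ → ℝ) h
  refine ⟨a / (a ^ 2 - 2 * b ^ 2), -b / (a ^ 2 - 2 * b ^ 2), ?_⟩
  have key : ((a : ℝ) + b * Real.sqrt 2) *
      (((a / (a ^ 2 - 2 * b ^ 2) : ℚ) : ℝ) + ((-b / (a ^ 2 - 2 * b ^ 2) : ℚ) : ℝ) * Real.sqrt 2) = 1 := by
    push_cast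
    field_simp
    linear_combination mul_inv_cancel₀ hD + (-(b : ℝ) ^ 2 * ((a : ℝ) ^ 2 - 2 * (b : ℝ) ^ 2)⁻¹) * sqrt2_sq
  exact inv_eq_of_mul_eq_one_right key

lemma sqrt2_pos : (0:ℝ) < Real.sqrt 2 := lt_trans one_pos sqrt2_gt_one
lemma beta_pos : 0 < β := by unfold β; linarith [sqrt2_gt_one]
lemma beta_lt_one : β < 1 := by unfold β; linarith [sqrt2_lt_two]
lemma omega_gt_one : 1 < ω := by unfold ω; linarith [sqrt2_pos]
lemma omega_pos : 0 < ω := lt_trans one_pos omega_gt_one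

lemma q_beta : β ∈ QSqrt2 := q_sub q_sqrt2 q_one
lemma q_omega : ω ∈ QSqrt2 := q_add q_sqrt2 q_one
lemma q_Delta (i : ℤ) : Δ i ∈ QSqrt2 := by
  unfold Δ
  split_ifs
  · exact q_pow q_beta _
  · exact q_beta
  · exact q_sub q_sqrt2 (q_pow q_beta _)

/-- slp of the affine branch on `I_i`. -/
def slp (i : ℤ) : ℝ :=
  if i < 0 then -(ω ^ (i.natAbs + 1)) else if i = 0 then ω else ω ^ (i.natAbs + 1)

/-- intercept of the affine branch on `I_i`. -/
def icpt (i : ℤ) : ℝ :=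
  if i < 0 then ω ^ (i.natAbs + 1) * Δ i
  else if i = 0 then -(ω * β)
  else -(ω ^ (i.natAbs + 1) * Δ i)

lemma fval_affine (i : ℤ) (s : ℝ) : fval i s = slp i * s + icpt i := by
  unfold fval slp icpt
  split_ifs <;> ring

lemma q_slope (i : ℤ) : slp i ∈ QSqrt2 := by
  unfold slp; split_ifs
  · exact q_neg (q_pow q_omega _)
  · exact q_omega
  · exact q_pow q_omega _

lemma q_icpt (i : ℤ) : icpt i ∈ QSqrt2 := by
  unfold icpt; split_ifs
  · exact q_mul (q_pow q_omega _) (q_Delta i)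
  · exact q_neg (q_mul q_omega q_beta)
  · exact q_neg (q_mul (q_pow q_omega _) (q_Delta i))

lemma omega_le_abs_slope (i : ℤ) : ω ≤ |slp i| := by
  have h1 : (1:ℝ) ≤ ω := le_of_lt omega_gt_one
  have hp : ∀ n : ℕ, ω ≤ ω ^ (n + 1) := fun n =>
    le_self_pow₀ h1 (Nat.succ_ne_zero n)
  unfold slp
  split_ifs
  · rw [abs_neg, abs_of_nonneg (by positivity)]; exact hp _
  · rw [abs_of_pos omega_pos]
  · rw [abs_of_nonneg (by positivity)]; exact hp _

lemma slope_ne_zero (i : ℤ) : slp i ≠ 0 := by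
  intro h
  have := omega_le_abs_slope i
  rw [h, abs_zero] at this
  linarith [omega_pos]

lemma mem_Iint_bounds {i : ℤ} {x : ℝ} (hx : x ∈ Iint i) :
    0 ≤ x ∧ x ≤ Real.sqrt 2 := by
  have hb0 : ∀ n : ℕ, 0 < β ^ n := fun n => pow_pos beta_pos n
  have hb1 : ∀ n : ℕ, β ^ n ≤ 1 := fun n =>
    pow_le_one₀ (le_of_lt beta_pos) (le_of_lt beta_lt_one)
  unfold Iint at hx
  split_ifs at hx with h1 h2
  · obtain ⟨hl, hr⟩ := hx
    have hΔ1 : Δ (i - 1) = β ^ (i - 1).natAbs := by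
      unfold Δ; rw [if_pos (by omega)]
    have hΔ2 : Δ i = β ^ i.natAbs := by
      unfold Δ; rw [if_pos h1]
    constructor
    · have := hb0 (i - 1).natAbs; rw [hΔ1] at hl; linarith
    · rw [hΔ2] at hr
      calc x ≤ β ^ i.natAbs := hr
        _ ≤ 1 := hb1 _
        _ ≤ Real.sqrt 2 := le_of_lt sqrt2_gt_one
  · obtain ⟨hl, hr⟩ := hx
    exact ⟨le_of_lt (lt_trans beta_pos hl), le_of_lt (lt_trans hr sqrt2_gt_one)⟩
  · obtain ⟨hl, hr⟩ := hx
    have hΔ1 : Δ i = Real.sqrt 2 - β ^ i.natAbs := by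
      unfold Δ; rw [if_neg h1, if_neg h2]
    have hΔ2 : Δ (i + 1) = Real.sqrt 2 - β ^ (i + 1).natAbs := by
      unfold Δ; rw [if_neg (by omega), if_neg (by omega)]
    constructor
    · rw [hΔ1] at hl
      have := hb1 i.natAbs
      linarith [sqrt2_gt_one]
    · rw [hΔ2] at hr
      have := hb0 (i + 1).natAbs
      linarith

/-- product of slopes along the itinerary. -/
def Aprod (σ : ℕ → ℤ) (m j : ℕ) : ℝ := ∏ l ∈ Finset.range j, slp (σ (m + l))

/-- accumulated intercept along the itinerary. -/
def Bsum (σ : ℕ → ℤ) (m : ℕ) : ℕ → ℝ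
  | 0 => 0
  | j + 1 => slp (σ (m + j)) * Bsum σ m j + icpt (σ (m + j))

lemma q_Aprod (σ : ℕ → ℤ) (m j : ℕ) : Aprod σ m j ∈ QSqrt2 := by
  induction j with
  | zero => simpa [Aprod] using q_one
  | succ j ih =>
      rw [Aprod, Finset.prod_range_succ]
      exact q_mul ih (q_slope _)

lemma q_Bsum (σ : ℕ → ℤ) (m j : ℕ) : Bsum σ m j ∈ QSqrt2 := by
  induction j with
  | zero => simpa [Bsum] using q_rat 0
  | succ j ih => exact q_add (q_mul (q_slope _) ih) (q_icpt _)

lemma Aprod_congr {σ : ℕ → ℤ} {m m' : ℕ} (j : ℕ)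
    (h : ∀ l, σ (m + l) = σ (m' + l)) : Aprod σ m j = Aprod σ m' j := by
  unfold Aprod
  exact Finset.prod_congr rfl fun l _ => by rw [h l]

lemma Bsum_congr {σ : ℕ → ℤ} {m m' : ℕ} (j : ℕ)
    (h : ∀ l, σ (m + l) = σ (m' + l)) : Bsum σ m j = Bsum σ m' j := by
  induction j with
  | zero => rfl
  | succ j ih => simp only [Bsum, ih, h j]

lemma omega_pow_le_abs_Aprod (σ : ℕ → ℤ) (m j : ℕ) :
    ω ^ j ≤ |Aprod σ m j| := by
  unfold Aprod
  rw [Finset.abs_prod]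
  calc ω ^ j = ∏ _l ∈ Finset.range j, ω := by
        rw [Finset.prod_const, Finset.card_range]
    _ ≤ ∏ l ∈ Finset.range j, |slp (σ (m + l))| :=
        Finset.prod_le_prod (fun _ _ => le_of_lt omega_pos)
          (fun l _ => omega_le_abs_slope _)


/-- `ℤ[√2]` as a subset of `ℝ`. -/
def ZSqrt2 : Set ℝ := {x | ∃ m n : ℤ, x = (m : ℝ) + (n : ℝ) * Real.sqrt 2}

/-- `M_d = {s ∈ [0,√2] : d·s ∈ ℤ[√2]}`. -/
def Mset (d : ℤ) : Set ℝ :=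
  {s | s ∈ Set.Icc 0 (Real.sqrt 2) ∧ (d : ℝ) * s ∈ ZSqrt2}

/-- if `s ∈ (0,√2)` has a never-vanishing orbit whose itinerary
is eventually periodic, then `s ∈ ℚ(√2)`. -/
theorem luroth_eventually_periodic_itinerary_mem_Qsqrt2
    (f : ℝ → ℝ) (hf : IsLuroth f) :
    ∀ s ∈ Set.Ioo (0 : ℝ) (Real.sqrt 2),
      (∀ k : ℕ, f^[k] s ≠ 0) →
      ∀ idx : ℕ → ℤ, (∀ k : ℕ, f^[k] s ∈ Iint (idx k)) →
      (∃ N p : ℕ, 1 ≤ p ∧ ∀ k : ℕ, N ≤ k → idx (k + p) = idx k) →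
      s ∈ QSqrt2 := by
  rintro s ⟨hs0, hs2⟩ hnz idx hmem ⟨N, p, hp, hper⟩
  -- basic step equation
  have hstep : ∀ k : ℕ, f^[k + 1] s = slp (idx k) * f^[k] s + icpt (idx k) := by
    intro k
    rw [Function.iterate_succ_apply', hf.2.2 (idx k) _ (hmem k), fval_affine]
  -- affine form of iterates
  have hiter : ∀ m j : ℕ, f^[m + j] s = Aprod idx m j * f^[m] s + Bsum idx m j := by
    intro m j
    induction j with
    | zero => simp [Aprod, Bsum]
    | succ j ih =>
        have : m + (j + 1) = (m + j) + 1 := by ring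
        rw [this, hstep (m + j), ih,
          show Aprod idx m (j + 1) = Aprod idx m j * slp (idx (m + j)) from
            Finset.prod_range_succ _ _,
          Bsum]
        ring
  -- periodicity of the itinerary under p-shifts
  have hshift : ∀ n l : ℕ, idx (N + n * p + l) = idx (N + l) := by
    intro n
    induction n with
    | zero => intro l; norm_num
    | succ n ih =>
        intro l
        have h1 : N + (n + 1) * p + l = (N + n * p + l) + p := by ring
        rw [h1, hper (N + n * p + l) (by omega)]
        exact ih l
  set A := Aprod idx N p with hA
  set B := Bsum idx N p with hB
  set T : ℕ → ℝ := fun n => f^[N + n * p] s with hT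
  have hTrec : ∀ n : ℕ, T (n + 1) = A * T n + B := by
    intro n
    have h1 : N + (n + 1) * p = (N + n * p) + p := by ring
    have h2 := hiter (N + n * p) p
    simp only [hT]
    rw [h1, h2, Aprod_congr p (hshift n), Bsum_congr p (hshift n)]
  -- |A| > 1
  have hAabs : 1 < |A| := by
    have h1 := omega_pow_le_abs_Aprod idx N p
    have h2 : ω ^ 1 ≤ ω ^ p := pow_le_pow_right₀ (le_of_lt omega_gt_one) hp
    rw [pow_one] at h2
    calc (1:ℝ) < ω := omega_gt_one
      _ ≤ ω ^ p := h2
      _ ≤ |A| := h1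
  -- bound on T
  have hTbd : ∀ n : ℕ, |T n| ≤ Real.sqrt 2 := by
    intro n
    obtain ⟨h1, h2⟩ := mem_Iint_bounds (hmem (N + n * p))
    rw [abs_of_nonneg h1]
    exact h2
  -- difference formula
  have hdiff : ∀ n : ℕ, T (n + 1) - T n = A ^ n * (T 1 - T 0) := by
    intro n
    induction n with
    | zero => simp
    | succ n ih =>
        have h1 := hTrec (n + 1)
        have h2 := hTrec n
        linear_combination h1 - h2 + A * ih
  -- T 1 = T 0
  have hfix : T 1 = T 0 := by
    by_contra hne
    have hd : 0 < |T 1 - T 0| := abs_pos.mpr (sub_ne_zero.mpr hne)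
    obtain ⟨n, hn⟩ := pow_unbounded_of_one_lt ((2 * Real.sqrt 2) / |T 1 - T 0|) hAabs
    have h1 : 2 * Real.sqrt 2 < |A| ^ n * |T 1 - T 0| := by
      rw [div_lt_iff₀ hd] at hn
      linarith
    have h2 : |T (n + 1) - T n| ≤ 2 * Real.sqrt 2 := by
      calc |T (n + 1) - T n| ≤ |T (n + 1)| + |T n| := abs_sub _ _
        _ ≤ 2 * Real.sqrt 2 := by linarith [hTbd (n + 1), hTbd n]
    rw [hdiff n, abs_mul, abs_pow] at h2
    linarith
  -- T 0 ∈ QSqrt2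
  have hAne1 : (1 : ℝ) - A ≠ 0 := by
    intro h
    have : A = 1 := by linarith [sub_eq_zero.mp h]
    rw [this, abs_one] at hAabs
    exact lt_irrefl _ hAabs
  have hT0 : T 0 = B * (1 - A)⁻¹ := by
    have h1 := hTrec 0
    rw [hfix] at h1
    field_simp
    linarith
  have hT0Q : T 0 ∈ QSqrt2 := by
    rw [hT0]
    exact q_mul (q_Bsum idx N p) (q_inv (q_sub q_one (q_Aprod idx N p)))
  -- backward propagation
  have hback : ∀ k : ℕ, f^[k + 1] s ∈ QSqrt2 → f^[k] s ∈ QSqrt2 := by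
    intro k hk
    have hx : f^[k] s = (f^[k + 1] s - icpt (idx k)) * (slp (idx k))⁻¹ := by
      rw [hstep k]
      field_simp [slope_ne_zero (idx k)]
      ring
    rw [hx]
    exact q_mul (q_sub hk (q_icpt _)) (q_inv (q_slope _))
  have hdown : ∀ j : ℕ, f^[N - j] s ∈ QSqrt2 := by
    intro j
    induction j with
    | zero =>
        have : N - 0 = N + 0 * p := by omega
        rw [this]
        exact hT0Q
    | succ j ih =>
        by_cases hj : j < N
        · have h1 : N - j = (N - (j + 1)) + 1 := by omega
          rw [h1] at ih
          exact hback _ ih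
        · have h1 : N - (j + 1) = N - j := by omega
          rw [h1]
          exact ih
  have := hdown N
  rw [Nat.sub_self] at this
  simpa using this
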